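/- Let f₁(x) = ∑_{m≥0} b_m x^m with b_m ≥ 0 converge at x = 1 (hence on [−1,1]), and let g(t) = ∑_{q≥0} a_q t^q with a_q ≥ 0 converge for all t ∈ ℝ. Define K_N(X, Y) := g(∑_{i=1}^n f₁(⟨X_i, Y_i⟩_{ℝ^d})) on I × I. Suppose e₁,…,eₙ : S^{d-1} → ℝ are continuous and there are functions λ_i : ℕ → ℝ with 0 ≤ λ_i(α) ≤ (|S^{d-1}| · f₁(1))^α for all α, such that for every i, every α ∈ ℕ and every y ∈ S^{d-1}: ∫_{S^{d-1}} f₁(⟨x, y⟩)^α e_i(x) dσ_{d-1}(x) = λ_i(α) e_i(y). Then the number μ := ∑_{q≥0} a_q ∑_{α₁+⋯+αₙ=q} (q!/(α₁!⋯αₙ!)) ∏_{i=1}^n λ_i(α_i) is given by an absolutely convergent series, and for every Y ∈ I: ∫_I K_N(X, Y) ∏_{i=1}^n e_i(X_i) d(⊗_{i=1}^n σ_{d-1})(X) = μ · ∏_{i=1}^n e_i(Y_i). -/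

import Mathlib

open scoped BigOperators
open MeasureTheory

/-- The surface (Lebesgue) measure `σ_{d-1}` on the unit sphere `S^{d-1} ⊆ ℝ^d`. -/
noncomputable def sphereMeasure (d : ℕ) :
    Measure (Metric.sphere (0 : EuclideanSpace ℝ (Fin d)) 1) :=
  (volume : Measure (EuclideanSpace ℝ (Fin d))).toSphere

/-- `dotSeries b x = ∑_{m≥0} b m x^m`, i.e. `f₁(x)`. -/
noncomputable def dotSeries (b : ℕ → ℝ) (x : ℝ) : ℝ :=
  ∑' m : ℕ, b m * x ^ m

/-- The multi-layer kernel `K_N(X, Y) := g(∑_{i=1}^n f₁(⟨X_i, Y_i⟩))` with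
`g(t) = ∑_q a_q t^q`. -/
noncomputable def kerNK (d n : ℕ) (b a : ℕ → ℝ)
    (X Y : Fin n → Metric.sphere (0 : EuclideanSpace ℝ (Fin d)) 1) : ℝ :=
  ∑' q : ℕ, a q *
    (∑ i : Fin n,
        dotSeries b
          ((inner ℝ ((X i : EuclideanSpace ℝ (Fin d))) ((Y i : EuclideanSpace ℝ (Fin d))) : ℝ)))
      ^ q

section Aux

variable {b : ℕ → ℝ}

lemma dotSeries_one_nonneg (hb0 : ∀ m, 0 ≤ b m) : 0 ≤ dotSeries b 1 :=
  tsum_nonneg fun m => by simpa using hb0 m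

lemma dotSeries_norm_le (hb0 : ∀ m, 0 ≤ b m) (hb1 : Summable b) {t : ℝ} (ht : |t| ≤ 1) :
    |dotSeries b t| ≤ dotSeries b 1 := by
  have hle : ∀ m, ‖b m * t ^ m‖ ≤ b m := by
    intro m
    rw [Real.norm_eq_abs, abs_mul, abs_of_nonneg (hb0 m), abs_pow]
    calc b m * |t| ^ m ≤ b m * 1 := by
          have : |t| ^ m ≤ 1 := pow_le_one₀ (abs_nonneg t) ht
          exact mul_le_mul_of_nonneg_left this (hb0 m)
      _ = b m := mul_one _
  have hnormsum : Summable fun m => ‖b m * t ^ m‖ :=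
    Summable.of_nonneg_of_le (fun m => norm_nonneg _) hle hb1
  have h1 : dotSeries b 1 = ∑' m, b m := by simp [dotSeries]
  calc |dotSeries b t| ≤ ∑' m, ‖b m * t ^ m‖ := by
        rw [← Real.norm_eq_abs]; exact norm_tsum_le_tsum_norm hnormsum
    _ ≤ ∑' m, b m := Summable.tsum_le_tsum hle hnormsum hb1
    _ = dotSeries b 1 := h1.symm

lemma abs_inner_sphere_le (d : ℕ) (x y : Metric.sphere (0 : EuclideanSpace ℝ (Fin d)) 1) :
    |(inner ℝ ((x : EuclideanSpace ℝ (Fin d))) ((y : EuclideanSpace ℝ (Fin d))) : ℝ)| ≤ 1 := by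
  have h := abs_real_inner_le_norm (x : EuclideanSpace ℝ (Fin d)) (y : EuclideanSpace ℝ (Fin d))
  simpa using h

lemma continuous_dotSeries_inner (d : ℕ) (hb0 : ∀ m, 0 ≤ b m) (hb1 : Summable b)
    (y : Metric.sphere (0 : EuclideanSpace ℝ (Fin d)) 1) :
    Continuous fun x : Metric.sphere (0 : EuclideanSpace ℝ (Fin d)) 1 =>
      dotSeries b ((inner ℝ ((x : EuclideanSpace ℝ (Fin d))) ((y : EuclideanSpace ℝ (Fin d))) : ℝ)) := by
  unfold dotSeries
  refine continuous_tsum (u := b) (fun m => ?_) hb1 (fun m x => ?_)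
  · exact continuous_const.mul ((continuous_subtype_val.inner continuous_const).pow m)
  · rw [Real.norm_eq_abs, abs_mul, abs_of_nonneg (hb0 m), abs_pow]
    have h1 : |(inner ℝ ((x : EuclideanSpace ℝ (Fin d))) ((y : EuclideanSpace ℝ (Fin d))) : ℝ)| ≤ 1 :=
      abs_inner_sphere_le d x y
    have : |(inner ℝ ((x : EuclideanSpace ℝ (Fin d))) ((y : EuclideanSpace ℝ (Fin d))) : ℝ)| ^ m ≤ 1 :=
      pow_le_one₀ (abs_nonneg _) h1
    calc b m * _ ≤ b m * 1 := mul_le_mul_of_nonneg_left this (hb0 m)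
      _ = b m := mul_one _

end Aux

/-- Suppose `f₁ = ∑ b_m x^m` with `b_m ≥ 0` converges at `x = 1`, and
`g = ∑ a_q t^q` with `a_q ≥ 0` converges on all of `ℝ`. If `e₁, …, eₙ` are continuous on
`S^{d-1}` with `∫ f₁(⟨x,y⟩)^α e_i(x) dσ_{d-1}(x) = λ_i(α) e_i(y)` and
`0 ≤ λ_i(α) ≤ (|S^{d-1}| f₁(1))^α`, then
`μ := ∑_q a_q ∑_{α₁+⋯+αₙ=q} (q!/(α₁!⋯αₙ!)) ∏ λ_i(α_i)` is given by an absolutely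
convergent series and `∫_I K_N(X,Y) ∏ e_i(X_i) d(⊗σ_{d-1})(X) = μ ∏ e_i(Y_i)`. -/
theorem stmt_13 (d n : ℕ) (hd : 2 ≤ d) (hn : 1 ≤ n)
    (b a : ℕ → ℝ) (hb0 : ∀ m : ℕ, 0 ≤ b m) (hb1 : Summable b)
    (ha0 : ∀ q : ℕ, 0 ≤ a q) (hag : ∀ t : ℝ, Summable fun q : ℕ => a q * t ^ q)
    (e : Fin n → Metric.sphere (0 : EuclideanSpace ℝ (Fin d)) 1 → ℝ)
    (he : ∀ i, Continuous (e i))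
    (lam : Fin n → ℕ → ℝ)
    (hlam : ∀ (i : Fin n) (α : ℕ),
      0 ≤ lam i α ∧
        lam i α ≤ ((sphereMeasure d Set.univ).toReal * dotSeries b 1) ^ α)
    (heig : ∀ (i : Fin n) (α : ℕ) (y : Metric.sphere (0 : EuclideanSpace ℝ (Fin d)) 1),
      (∫ x : Metric.sphere (0 : EuclideanSpace ℝ (Fin d)) 1,
          (dotSeries b
              ((inner ℝ ((x : EuclideanSpace ℝ (Fin d))) ((y : EuclideanSpace ℝ (Fin d))) : ℝ)))
              ^ α * e i x ∂(sphereMeasure d)) = lam i α * e i y) :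
    Summable (fun q : ℕ => a q * ∑ t ∈ Finset.Nat.antidiagonalTuple n q,
      (Nat.multinomial Finset.univ t : ℝ) * ∏ i, lam i (t i)) ∧
    ∀ Y : Fin n → Metric.sphere (0 : EuclideanSpace ℝ (Fin d)) 1,
      (∫ X : Fin n → Metric.sphere (0 : EuclideanSpace ℝ (Fin d)) 1,
          kerNK d n b a X Y * ∏ i, e i (X i)
          ∂(Measure.pi fun _ : Fin n => sphereMeasure d)) =
        (∑' q : ℕ, a q * ∑ t ∈ Finset.Nat.antidiagonalTuple n q,
          (Nat.multinomial Finset.univ t : ℝ) * ∏ i, lam i (t i)) * ∏ i, e i (Y i) := by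
  
  classical
  haveI hmeas_fin : IsFiniteMeasure (sphereMeasure d) := by
    unfold sphereMeasure; infer_instance
  letI msSph : MeasureSpace (Metric.sphere (0 : EuclideanSpace ℝ (Fin d)) 1) :=
    ⟨sphereMeasure d⟩
  haveI : IsFiniteMeasure
      (volume : Measure (Metric.sphere (0 : EuclideanSpace ℝ (Fin d)) 1)) := hmeas_fin
  haveI hpifin : IsFiniteMeasure (Measure.pi fun _ : Fin n => sphereMeasure d) :=
    Measure.pi.instIsFiniteMeasure _
  set f1 : ℝ := dotSeries b 1 with hf1def
  have hf1 : 0 ≤ f1 := dotSeries_one_nonneg hb0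
  set C : ℝ := (sphereMeasure d Set.univ).toReal * f1 with hCdef
  have hC : 0 ≤ C := mul_nonneg ENNReal.toReal_nonneg hf1
  -- Part 1 : summability
  have hMnonneg : ∀ q : ℕ, ∀ t ∈ Finset.Nat.antidiagonalTuple n q,
      (0:ℝ) ≤ (Nat.multinomial Finset.univ t : ℝ) * ∏ i, lam i (t i) := by
    intro q t _
    exact mul_nonneg (Nat.cast_nonneg _) (Finset.prod_nonneg fun i _ => (hlam i (t i)).1)
  have hMle : ∀ q : ℕ,
      (∑ t ∈ Finset.Nat.antidiagonalTuple n q,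
        (Nat.multinomial Finset.univ t : ℝ) * ∏ i, lam i (t i)) ≤ ((n : ℝ) * C) ^ q := by
    intro q
    have key : ((n : ℝ) * C) ^ q = ∑ t ∈ Finset.Nat.antidiagonalTuple n q,
        (Nat.multinomial Finset.univ t : ℝ) * ∏ i, C ^ t i := by
      rw [← Finset.piAntidiag_univ_fin_eq_antidiagonalTuple q n,
        ← Finset.sum_pow_eq_sum_piAntidiag]
      simp [mul_comm]
    rw [key]
    refine Finset.sum_le_sum fun t ht => ?_
    refine mul_le_mul_of_nonneg_left ?_ (Nat.cast_nonneg _)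
    exact Finset.prod_le_prod (fun i _ => (hlam i (t i)).1) (fun i _ => (hlam i (t i)).2)
  have hsummu : Summable (fun q : ℕ => a q * ∑ t ∈ Finset.Nat.antidiagonalTuple n q,
      (Nat.multinomial Finset.univ t : ℝ) * ∏ i, lam i (t i)) := by
    refine Summable.of_nonneg_of_le
      (fun q => mul_nonneg (ha0 q) (Finset.sum_nonneg (hMnonneg q)))
      (fun q => mul_le_mul_of_nonneg_left (hMle q) (ha0 q)) (hag ((n : ℝ) * C))
  refine ⟨hsummu, ?_⟩
  intro Y
  -- continuity facts
  have hScont : Continuous fun X : Fin n → Metric.sphere (0 : EuclideanSpace ℝ (Fin d)) 1 =>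
      ∑ i : Fin n, dotSeries b
        ((inner ℝ ((X i : EuclideanSpace ℝ (Fin d))) ((Y i : EuclideanSpace ℝ (Fin d))) : ℝ)) :=
    continuous_finset_sum _ fun i _ =>
      (continuous_dotSeries_inner d hb0 hb1 (Y i)).comp (continuous_apply i)
  have hPcont : Continuous fun X : Fin n → Metric.sphere (0 : EuclideanSpace ℝ (Fin d)) 1 =>
      ∏ i : Fin n, e i (X i) :=
    continuous_finset_prod _ fun i _ => (he i).comp (continuous_apply i)
  have hSb : ∀ X : Fin n → Metric.sphere (0 : EuclideanSpace ℝ (Fin d)) 1,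
      |∑ i : Fin n, dotSeries b
        ((inner ℝ ((X i : EuclideanSpace ℝ (Fin d))) ((Y i : EuclideanSpace ℝ (Fin d))) : ℝ))|
        ≤ (n : ℝ) * f1 := by
    intro X
    calc |∑ i : Fin n, dotSeries b
          ((inner ℝ ((X i : EuclideanSpace ℝ (Fin d))) ((Y i : EuclideanSpace ℝ (Fin d))) : ℝ))|
        ≤ ∑ i : Fin n, |dotSeries b
          ((inner ℝ ((X i : EuclideanSpace ℝ (Fin d))) ((Y i : EuclideanSpace ℝ (Fin d))) : ℝ))| :=
          Finset.abs_sum_le_sum_abs _ _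
      _ ≤ ∑ _i : Fin n, f1 := Finset.sum_le_sum fun i _ =>
          dotSeries_norm_le hb0 hb1 (abs_inner_sphere_le d (X i) (Y i))
      _ = (n : ℝ) * f1 := by simp [mul_comm]
  obtain ⟨Cp, hCp0, hCp⟩ : ∃ Cp : ℝ, 0 ≤ Cp ∧
      ∀ X : Fin n → Metric.sphere (0 : EuclideanSpace ℝ (Fin d)) 1,
        |∏ i : Fin n, e i (X i)| ≤ Cp := by
    obtain ⟨Cp, hCp⟩ := (isCompact_range hPcont.abs).bddAbove
    exact ⟨max Cp 0, le_max_right _ _,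
      fun X => le_trans (hCp (Set.mem_range_self X)) (le_max_left _ _)⟩
  -- integrability of each term
  have hFc : ∀ q : ℕ, Continuous fun X : Fin n → Metric.sphere (0 : EuclideanSpace ℝ (Fin d)) 1 =>
      a q * (∑ i : Fin n, dotSeries b
        ((inner ℝ ((X i : EuclideanSpace ℝ (Fin d))) ((Y i : EuclideanSpace ℝ (Fin d))) : ℝ))) ^ q
        * ∏ i : Fin n, e i (X i) :=
    fun q => (continuous_const.mul (hScont.pow q)).mul hPcont
  have hFint : ∀ q : ℕ, Integrable (fun X : Fin n → Metric.sphere (0 : EuclideanSpace ℝ (Fin d)) 1 =>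
      a q * (∑ i : Fin n, dotSeries b
        ((inner ℝ ((X i : EuclideanSpace ℝ (Fin d))) ((Y i : EuclideanSpace ℝ (Fin d))) : ℝ))) ^ q
        * ∏ i : Fin n, e i (X i)) (Measure.pi fun _ : Fin n => sphereMeasure d) :=
    fun q => (hFc q).integrable_of_hasCompactSupport (HasCompactSupport.of_compactSpace _)
  -- norm bounds
  have hFb : ∀ (q : ℕ) (X : Fin n → Metric.sphere (0 : EuclideanSpace ℝ (Fin d)) 1),
      ‖a q * (∑ i : Fin n, dotSeries b
        ((inner ℝ ((X i : EuclideanSpace ℝ (Fin d))) ((Y i : EuclideanSpace ℝ (Fin d))) : ℝ))) ^ q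
        * ∏ i : Fin n, e i (X i)‖ ≤ a q * ((n : ℝ) * f1) ^ q * Cp := by
    intro q X
    rw [Real.norm_eq_abs, abs_mul, abs_mul, abs_of_nonneg (ha0 q), abs_pow]
    have h1 : |∑ i : Fin n, dotSeries b
        ((inner ℝ ((X i : EuclideanSpace ℝ (Fin d))) ((Y i : EuclideanSpace ℝ (Fin d))) : ℝ))| ^ q
        ≤ ((n : ℝ) * f1) ^ q := pow_le_pow_left₀ (abs_nonneg _) (hSb X) q
    have h2 := hCp X
    refine mul_le_mul (mul_le_mul_of_nonneg_left h1 (ha0 q)) h2 (abs_nonneg _) ?_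
    exact mul_nonneg (ha0 q) (pow_nonneg (mul_nonneg (by positivity) hf1) q)
  set V : ℝ := ((Measure.pi fun _ : Fin n => sphereMeasure d) Set.univ).toReal with hVdef
  have hIsum : Summable fun q : ℕ =>
      ∫ X, ‖a q * (∑ i : Fin n, dotSeries b
        ((inner ℝ ((X i : EuclideanSpace ℝ (Fin d))) ((Y i : EuclideanSpace ℝ (Fin d))) : ℝ))) ^ q
        * ∏ i : Fin n, e i (X i)‖ ∂(Measure.pi fun _ : Fin n => sphereMeasure d) := by
    have hBsum : Summable fun q : ℕ => a q * ((n : ℝ) * f1) ^ q * Cp * V :=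
      ((hag _).mul_right Cp).mul_right V
    refine Summable.of_nonneg_of_le (fun q => integral_nonneg fun X => norm_nonneg _)
      (fun q => ?_) hBsum
    have h := integral_mono ((hFint q).norm)
      (integrable_const (a q * ((n : ℝ) * f1) ^ q * Cp)) (hFb q)
    rw [integral_const, smul_eq_mul] at h
    calc (∫ X, ‖_‖ ∂(Measure.pi fun _ : Fin n => sphereMeasure d)) ≤
        V * (a q * ((n : ℝ) * f1) ^ q * Cp) := h
      _ = a q * ((n : ℝ) * f1) ^ q * Cp * V := by ring
  have key := integral_tsum_of_summable_integral_norm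
    (F := fun (q : ℕ) (X : Fin n → Metric.sphere (0 : EuclideanSpace ℝ (Fin d)) 1) =>
      a q * (∑ i : Fin n, dotSeries b
        ((inner ℝ ((X i : EuclideanSpace ℝ (Fin d))) ((Y i : EuclideanSpace ℝ (Fin d))) : ℝ))) ^ q
        * ∏ i : Fin n, e i (X i)) hFint hIsum
  have hker : (fun X : Fin n → Metric.sphere (0 : EuclideanSpace ℝ (Fin d)) 1 =>
      kerNK d n b a X Y * ∏ i : Fin n, e i (X i))
      = fun X => ∑' q : ℕ, a q * (∑ i : Fin n, dotSeries b
        ((inner ℝ ((X i : EuclideanSpace ℝ (Fin d))) ((Y i : EuclideanSpace ℝ (Fin d))) : ℝ))) ^ q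
        * ∏ i : Fin n, e i (X i) := by
    funext X
    rw [kerNK, tsum_mul_right]
  rw [hker, ← key, ← tsum_mul_right]
  refine tsum_congr fun q => ?_
  -- per-q computation
  have hexp : (fun X : Fin n → Metric.sphere (0 : EuclideanSpace ℝ (Fin d)) 1 =>
      a q * (∑ i : Fin n, dotSeries b
        ((inner ℝ ((X i : EuclideanSpace ℝ (Fin d))) ((Y i : EuclideanSpace ℝ (Fin d))) : ℝ))) ^ q
        * ∏ i : Fin n, e i (X i))
      = fun X => ∑ k ∈ Finset.piAntidiag Finset.univ q,
          a q * ((Nat.multinomial Finset.univ k : ℝ) *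
            ∏ i : Fin n, (dotSeries b
              ((inner ℝ ((X i : EuclideanSpace ℝ (Fin d))) ((Y i : EuclideanSpace ℝ (Fin d))) : ℝ))
                ^ k i * e i (X i))) := by
    funext X
    rw [Finset.sum_pow_eq_sum_piAntidiag, Finset.mul_sum, Finset.sum_mul]
    refine Finset.sum_congr rfl fun k hk => ?_
    rw [mul_assoc, mul_assoc, ← Finset.prod_mul_distrib]
  rw [hexp]
  have hintk : ∀ k ∈ Finset.piAntidiag (Finset.univ : Finset (Fin n)) q,
      Integrable (fun X : Fin n → Metric.sphere (0 : EuclideanSpace ℝ (Fin d)) 1 =>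
        a q * ((Nat.multinomial Finset.univ k : ℝ) *
          ∏ i : Fin n, (dotSeries b
            ((inner ℝ ((X i : EuclideanSpace ℝ (Fin d))) ((Y i : EuclideanSpace ℝ (Fin d))) : ℝ))
              ^ k i * e i (X i))))
        (Measure.pi fun _ : Fin n => sphereMeasure d) := by
    intro k _
    have hc : Continuous fun X : Fin n → Metric.sphere (0 : EuclideanSpace ℝ (Fin d)) 1 =>
        a q * ((Nat.multinomial Finset.univ k : ℝ) *
          ∏ i : Fin n, (dotSeries b
            ((inner ℝ ((X i : EuclideanSpace ℝ (Fin d))) ((Y i : EuclideanSpace ℝ (Fin d))) : ℝ))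
              ^ k i * e i (X i))) := by
      refine continuous_const.mul (continuous_const.mul (continuous_finset_prod _ fun i _ => ?_))
      exact (((continuous_dotSeries_inner d hb0 hb1 (Y i)).comp (continuous_apply i)).pow (k i)).mul
        ((he i).comp (continuous_apply i))
    exact hc.integrable_of_hasCompactSupport (HasCompactSupport.of_compactSpace _)
  rw [integral_finset_sum _ hintk]
  have hval : ∀ k ∈ Finset.piAntidiag (Finset.univ : Finset (Fin n)) q,
      (∫ X, a q * ((Nat.multinomial Finset.univ k : ℝ) *
          ∏ i : Fin n, (dotSeries b
            ((inner ℝ ((X i : EuclideanSpace ℝ (Fin d))) ((Y i : EuclideanSpace ℝ (Fin d))) : ℝ))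
              ^ k i * e i (X i)))
        ∂(Measure.pi fun _ : Fin n => sphereMeasure d))
      = a q * ((Nat.multinomial Finset.univ k : ℝ) *
          ((∏ i : Fin n, lam i (k i)) * ∏ i : Fin n, e i (Y i))) := by
    intro k _
    rw [integral_const_mul, integral_const_mul]
    congr 2
    have hprod : (∫ X, ∏ i : Fin n, (dotSeries b
          ((inner ℝ ((X i : EuclideanSpace ℝ (Fin d))) ((Y i : EuclideanSpace ℝ (Fin d))) : ℝ))
            ^ k i * e i (X i))
        ∂(Measure.pi fun _ : Fin n => sphereMeasure d))
        = ∏ i : Fin n, ∫ x : Metric.sphere (0 : EuclideanSpace ℝ (Fin d)) 1,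
            dotSeries b
              ((inner ℝ ((x : EuclideanSpace ℝ (Fin d))) ((Y i : EuclideanSpace ℝ (Fin d))) : ℝ))
              ^ k i * e i x ∂(sphereMeasure d) :=
      integral_fintype_prod_eq_prod (ι := Fin n)
        (fun i (x : Metric.sphere (0 : EuclideanSpace ℝ (Fin d)) 1) =>
          dotSeries b
            ((inner ℝ ((x : EuclideanSpace ℝ (Fin d))) ((Y i : EuclideanSpace ℝ (Fin d))) : ℝ))
            ^ k i * e i x)
    rw [hprod, ← Finset.prod_mul_distrib]
    exact Finset.prod_congr rfl fun i _ => heig i (k i) (Y i)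
  rw [Finset.sum_congr rfl hval, ← Finset.piAntidiag_univ_fin_eq_antidiagonalTuple q n,
    Finset.mul_sum, Finset.sum_mul]
  exact Finset.sum_congr rfl fun k _ => by ring
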